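/- Let q₁, q₂ ∈ ℂ ∖ {0} and set q = q₁ q₂; assume q ∉ p^ℤ (equivalently ϑ(q) ≠ 0). Then ζ^E(x) = ϑ(x q₁)ϑ(x q₂)/(ϑ(x)ϑ(x q)) has residue ϑ(q₁)ϑ(q₂)/(q·ϑ(q)) at x = q^{−1}: the function x ↦ (x − q^{−1})·ζ^E(x) tends to ϑ(q₁)ϑ(q₂)/(q·ϑ(q)) as x tends to q^{−1} with x ≠ q^{−1}. -/

import Mathlib

open Filter Topology

/-- The Jacobi theta function
`ϑ(z) = (1 − z) · ∏_{s=1}^∞ (1 − p^s z)(1 − p^s z⁻¹)/(1 − p^s)^2`. -/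
noncomputable def jTheta (p z : ℂ) : ℂ :=
  (1 - z) * ∏' s : ℕ,
    (1 - p ^ (s + 1) * z) * (1 - p ^ (s + 1) * z⁻¹) / (1 - p ^ (s + 1)) ^ 2

/-- `ζ^E(x) = ϑ(xq₁)ϑ(xq₂)/(ϑ(x)ϑ(xq₁q₂))`. -/
noncomputable def zetaE (p q₁ q₂ x : ℂ) : ℂ :=
  jTheta p (x * q₁) * jTheta p (x * q₂) / (jTheta p x * jTheta p (x * (q₁ * q₂)))

/-! ### Auxiliary definitions -/

noncomputable def jTerm (p z : ℂ) (s : ℕ) : ℂ :=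
  (1 - p ^ (s + 1) * z) * (1 - p ^ (s + 1) * z⁻¹) / (1 - p ^ (s + 1)) ^ 2

noncomputable def jProd (p z : ℂ) : ℂ := ∏' s, jTerm p z s

noncomputable def gTerm (p : ℂ) (N : ℕ) (z : ℂ) (s : ℕ) : ℂ :=
  Complex.log (1 - p ^ (s + N + 1) * z) + Complex.log (1 - p ^ (s + N + 1) * z⁻¹)
    - 2 * Complex.log (1 - p ^ (s + N + 1))

lemma jTheta_eq (p z : ℂ) : jTheta p z = (1 - z) * jProd p z := rfl

/-! ### Elementary facts about `1 - w` for small `w` -/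

lemma aux_slit {w : ℂ} (hw : ‖w‖ ≤ 1/2) : (1 - w) ∈ Complex.slitPlane := by
  rw [Complex.mem_slitPlane_iff]
  left
  have h1 : |w.re| ≤ ‖w‖ := Complex.abs_re_le_norm w
  have h2 : ‖w‖ ≤ 1/2 := hw
  have : w.re ≤ 1/2 := le_trans (le_abs_self _) (le_trans h1 h2)
  simp only [Complex.sub_re, Complex.one_re]
  linarith

lemma aux_ne {w : ℂ} (hw : ‖w‖ ≤ 1/2) : (1 : ℂ) - w ≠ 0 :=
  Complex.slitPlane_ne_zero (aux_slit hw)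

lemma aux_log {w : ℂ} (hw : ‖w‖ ≤ 1/2) : ‖Complex.log (1 - w)‖ ≤ 3/2 * ‖w‖ := by
  have := Complex.norm_log_one_add_half_le_self (z := -w) (by simpa using hw)
  simpa [sub_eq_add_neg] using this

lemma one_sub_ne {w : ℂ} (hw : ‖w‖ < 1) : (1 : ℂ) - w ≠ 0 := by
  intro h
  have : (1 : ℂ) = w := by linear_combination h
  rw [← this] at hw
  simp at hw

lemma one_sub_pow_ne {p : ℂ} (hp1 : ‖p‖ < 1) (s : ℕ) : (1 : ℂ) - p ^ (s + 1) ≠ 0 := by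
  apply one_sub_ne
  rw [norm_pow]
  exact pow_lt_one₀ (norm_nonneg p) hp1 (Nat.succ_ne_zero s)

/-! ### The tail of the product as an exponential -/

section tail

variable {p : ℂ} {N : ℕ} {z : ℂ}

lemma pow_tail_le (hp1 : ‖p‖ < 1) (s : ℕ) : ‖p‖ ^ (s + N + 1) ≤ ‖p‖ ^ (N + 1) :=
  pow_le_pow_of_le_one (norm_nonneg p) hp1.le (by omega)

lemma small1 (hp1 : ‖p‖ < 1) (h1 : ‖p‖ ^ (N + 1) * ‖z‖ ≤ 1/2) (s : ℕ) :
    ‖p ^ (s + N + 1) * z‖ ≤ 1/2 := by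
  rw [norm_mul, norm_pow]
  exact le_trans (mul_le_mul_of_nonneg_right (pow_tail_le hp1 s) (norm_nonneg z)) h1

lemma small3 (hp1 : ‖p‖ < 1) (h3 : ‖p‖ ^ (N + 1) ≤ 1/2) (s : ℕ) :
    ‖p ^ (s + N + 1)‖ ≤ 1/2 := by
  rw [norm_pow]
  exact le_trans (pow_tail_le hp1 s) h3

lemma gTerm_norm_le (hp1 : ‖p‖ < 1) (h1 : ‖p‖ ^ (N + 1) * ‖z‖ ≤ 1/2)
    (h2 : ‖p‖ ^ (N + 1) * ‖z⁻¹‖ ≤ 1/2) (h3 : ‖p‖ ^ (N + 1) ≤ 1/2) (s : ℕ) :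
    ‖gTerm p N z s‖ ≤ 3/2 * (‖z‖ + ‖z⁻¹‖ + 2) * ‖p‖ ^ (N + 1) * ‖p‖ ^ s := by
  have la : ‖Complex.log (1 - p ^ (s + N + 1) * z)‖ ≤ 3/2 * ‖p ^ (s + N + 1) * z‖ :=
    aux_log (small1 hp1 h1 s)
  have lb : ‖Complex.log (1 - p ^ (s + N + 1) * z⁻¹)‖ ≤ 3/2 * ‖p ^ (s + N + 1) * z⁻¹‖ :=
    aux_log (small1 hp1 h2 s)
  have lc : ‖Complex.log (1 - p ^ (s + N + 1))‖ ≤ 3/2 * ‖p ^ (s + N + 1)‖ := by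
    have := aux_log (w := p ^ (s + N + 1)) (small3 hp1 h3 s)
    simpa using this
  have hnorm : ‖gTerm p N z s‖ ≤ ‖Complex.log (1 - p ^ (s + N + 1) * z)‖
      + ‖Complex.log (1 - p ^ (s + N + 1) * z⁻¹)‖
      + 2 * ‖Complex.log (1 - p ^ (s + N + 1))‖ := by
    unfold gTerm
    refine le_trans (norm_sub_le _ _) ?_
    have := norm_add_le (Complex.log (1 - p ^ (s + N + 1) * z))
      (Complex.log (1 - p ^ (s + N + 1) * z⁻¹))
    have h2' : ‖(2 : ℂ) * Complex.log (1 - p ^ (s + N + 1))‖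
        = 2 * ‖Complex.log (1 - p ^ (s + N + 1))‖ := by
      rw [norm_mul]; norm_num
    linarith
  have key3 : ‖p ^ (s + N + 1)‖ = ‖p‖ ^ (N + 1) * ‖p‖ ^ s := by
    rw [norm_pow, show s + N + 1 = (N + 1) + s by omega, pow_add]
  have key : ‖p ^ (s + N + 1) * z‖ = ‖p‖ ^ (N + 1) * ‖p‖ ^ s * ‖z‖ := by
    rw [norm_mul, key3]
  have key2 : ‖p ^ (s + N + 1) * z⁻¹‖ = ‖p‖ ^ (N + 1) * ‖p‖ ^ s * ‖z⁻¹‖ := by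
    rw [norm_mul, key3]
  rw [key] at la; rw [key2] at lb; rw [key3] at lc
  have hps : (0:ℝ) ≤ ‖p‖ ^ (N + 1) * ‖p‖ ^ s := by positivity
  nlinarith [norm_nonneg z, norm_nonneg z⁻¹]

lemma gTerm_summable (hp1 : ‖p‖ < 1) (h1 : ‖p‖ ^ (N + 1) * ‖z‖ ≤ 1/2)
    (h2 : ‖p‖ ^ (N + 1) * ‖z⁻¹‖ ≤ 1/2) (h3 : ‖p‖ ^ (N + 1) ≤ 1/2) :
    Summable (gTerm p N z) := by
  apply Summable.of_norm_bounded (Summable.mul_left (3/2 * (‖z‖ + ‖z⁻¹‖ + 2) * ‖p‖ ^ (N + 1))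
    (summable_geometric_of_lt_one (norm_nonneg p) hp1))
  exact gTerm_norm_le hp1 h1 h2 h3

lemma exp_gTerm (hp1 : ‖p‖ < 1) (h1 : ‖p‖ ^ (N + 1) * ‖z‖ ≤ 1/2)
    (h2 : ‖p‖ ^ (N + 1) * ‖z⁻¹‖ ≤ 1/2) (h3 : ‖p‖ ^ (N + 1) ≤ 1/2) (s : ℕ) :
    Complex.exp (gTerm p N z s) = jTerm p z (s + N) := by
  have ha := aux_ne (small1 hp1 h1 s)
  have hb := aux_ne (small1 hp1 h2 s)
  have hc : (1 : ℂ) - p ^ (s + N + 1) ≠ 0 := by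
    have := small3 hp1 h3 s; exact aux_ne this
  unfold gTerm jTerm
  rw [sub_eq_add_neg, Complex.exp_add, Complex.exp_add, Complex.exp_log ha, Complex.exp_log hb,
    Complex.exp_neg, two_mul, Complex.exp_add, Complex.exp_log hc]
  rw [div_eq_mul_inv]
  ring_nf

lemma tail_hasProd (hp1 : ‖p‖ < 1) (h1 : ‖p‖ ^ (N + 1) * ‖z‖ ≤ 1/2)
    (h2 : ‖p‖ ^ (N + 1) * ‖z⁻¹‖ ≤ 1/2) (h3 : ‖p‖ ^ (N + 1) ≤ 1/2) :
    HasProd (fun s => jTerm p z (s + N)) (Complex.exp (∑' s, gTerm p N z s)) := by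
  have hs := (gTerm_summable hp1 h1 h2 h3).hasSum
  exact HasProd.congr_fun hs.cexp fun s => (exp_gTerm hp1 h1 h2 h3 s).symm

lemma jProd_decomp (hp1 : ‖p‖ < 1) (h1 : ‖p‖ ^ (N + 1) * ‖z‖ ≤ 1/2)
    (h2 : ‖p‖ ^ (N + 1) * ‖z⁻¹‖ ≤ 1/2) (h3 : ‖p‖ ^ (N + 1) ≤ 1/2) :
    jProd p z = (∏ i ∈ Finset.range N, jTerm p z i) * Complex.exp (∑' s, gTerm p N z s) := by
  have hH := tail_hasProd hp1 h1 h2 h3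
  rw [jProd, ← Multipliable.prod_mul_tprod_nat_mul' (k := N) hH.multipliable, hH.tprod_eq]

end tail

/-! ### Choice of the cut-off -/

lemma exists_cutoff {p : ℂ} (hp1 : ‖p‖ < 1) {C : ℝ} (hC : 0 < C) :
    ∃ N : ℕ, ‖p‖ ^ (N + 1) * C ≤ 1/2 := by
  have ht : Tendsto (fun n : ℕ => ‖p‖ ^ n * C) atTop (𝓝 0) := by
    simpa using (tendsto_pow_atTop_nhds_zero_of_lt_one (norm_nonneg p) hp1).mul_const C
  have := ht.eventually (eventually_le_nhds (show (0:ℝ) < 1/2 by norm_num))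
  obtain ⟨N₀, hN₀⟩ := eventually_atTop.mp this
  exact ⟨N₀, hN₀ (N₀ + 1) (by omega)⟩

/-! ### Nonvanishing -/

lemma jProd_ne_zero {p z : ℂ} (hp1 : ‖p‖ < 1) (hterm : ∀ s, jTerm p z s ≠ 0) :
    jProd p z ≠ 0 := by
  obtain ⟨C, hCdef⟩ : ∃ C : ℝ, C = ‖z‖ + ‖z⁻¹‖ + 1 := ⟨_, rfl⟩
  have hC : 0 < C := by rw [hCdef]; positivity
  obtain ⟨N, hN⟩ := exists_cutoff hp1 hC
  have hpow : (0:ℝ) ≤ ‖p‖ ^ (N + 1) := by positivity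
  have hbz : ‖z‖ ≤ C := by simp only [hCdef]; linarith [norm_nonneg (z⁻¹)]
  have hbz' : ‖z⁻¹‖ ≤ C := by simp only [hCdef]; linarith [norm_nonneg z]
  have hb1 : (1:ℝ) ≤ C := by simp only [hCdef]; linarith [norm_nonneg z, norm_nonneg (z⁻¹)]
  have h1 : ‖p‖ ^ (N + 1) * ‖z‖ ≤ 1/2 :=
    le_trans (mul_le_mul_of_nonneg_left hbz hpow) hN
  have h2 : ‖p‖ ^ (N + 1) * ‖z⁻¹‖ ≤ 1/2 :=
    le_trans (mul_le_mul_of_nonneg_left hbz' hpow) hN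
  have h3 : ‖p‖ ^ (N + 1) ≤ 1/2 := by
    calc ‖p‖ ^ (N + 1) = ‖p‖ ^ (N + 1) * 1 := by ring
    _ ≤ ‖p‖ ^ (N + 1) * C := mul_le_mul_of_nonneg_left hb1 hpow
    _ ≤ 1/2 := hN
  rw [jProd_decomp hp1 h1 h2 h3]
  exact mul_ne_zero (Finset.prod_ne_zero_iff.mpr fun i _ => hterm i) (Complex.exp_ne_zero _)

lemma jTheta_ne_zero {p q : ℂ} (hp : p ≠ 0) (hp1 : ‖p‖ < 1)
    (hq : ∀ n : ℤ, q ≠ p ^ n) : jTheta p q ≠ 0 := by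
  rw [jTheta_eq]
  refine mul_ne_zero ?_ (jProd_ne_zero hp1 fun s => ?_)
  · intro h
    have : q = 1 := by linear_combination -h
    exact hq 0 (by simpa using this)
  · have hps : p ^ (s + 1) ≠ 0 := pow_ne_zero _ hp
    refine div_ne_zero (mul_ne_zero ?_ ?_) (pow_ne_zero _ (one_sub_pow_ne hp1 s))
    · intro h
      have hq' : q = (p ^ (s + 1))⁻¹ := by
        field_simp
        linear_combination -h
      exact hq (-((s + 1 : ℕ) : ℤ)) (by rw [hq', zpow_neg, zpow_natCast])
    · intro h
      have h0 : q ≠ 0 := by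
        intro h0
        rw [h0] at h
        simp at h
      have hmul : p ^ (s + 1) * q⁻¹ = 1 := by linear_combination -h
      have hq' : q = p ^ (s + 1) := by
        have h2 : p ^ (s + 1) * q⁻¹ * q = 1 * q := congrArg (· * q) hmul
        rw [mul_assoc, inv_mul_cancel₀ h0, mul_one, one_mul] at h2
        exact h2.symm
      exact hq ((s + 1 : ℕ) : ℤ) (by rw [hq', zpow_natCast])

/-! ### Continuity of `jProd` -/

lemma jProd_continuousAt {p : ℂ} (hp1 : ‖p‖ < 1) {z₀ : ℂ} (hz₀ : z₀ ≠ 0) :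
    ContinuousAt (jProd p) z₀ := by
  have hR : 0 < ‖z₀‖ := norm_pos_iff.mpr hz₀
  set R : ℝ := ‖z₀‖ with hRdef
  set S : Set ℂ := Metric.closedBall z₀ (R / 2) with hSdef
  have hmemS : S ∈ 𝓝 z₀ := Metric.closedBall_mem_nhds z₀ (by positivity)
  -- bounds on the ball
  have hlow : ∀ z ∈ S, R / 2 ≤ ‖z‖ := by
    intro z hz
    have : ‖z₀ - z‖ ≤ R / 2 := by
      rw [hSdef, Metric.mem_closedBall, dist_eq_norm] at hz
      rwa [norm_sub_rev]
    have := norm_sub_norm_le z₀ z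
    linarith
  have hupp : ∀ z ∈ S, ‖z‖ ≤ 3 * R / 2 := by
    intro z hz
    rw [hSdef, Metric.mem_closedBall, dist_eq_norm] at hz
    have := norm_sub_norm_le z z₀
    linarith
  have hzne : ∀ z ∈ S, z ≠ 0 := by
    intro z hz h0
    have := hlow z hz
    rw [h0] at this
    simp at this
    linarith
  have hinv : ∀ z ∈ S, ‖z⁻¹‖ ≤ 2 / R := by
    intro z hz
    rw [norm_inv]
    calc ‖z‖⁻¹ ≤ (R / 2)⁻¹ := inv_anti₀ (by positivity) (hlow z hz)
    _ = 2 / R := by rw [inv_div]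
  obtain ⟨C, hCdef⟩ : ∃ C : ℝ, C = 3 * R / 2 + 2 / R + 1 := ⟨_, rfl⟩
  have hC : 0 < C := by rw [hCdef]; positivity
  obtain ⟨N, hN⟩ := exists_cutoff hp1 hC
  have hpow : (0:ℝ) ≤ ‖p‖ ^ (N + 1) := by positivity
  have hzC : ∀ z ∈ S, ‖z‖ ≤ C := fun z hz => by
    have h1 := hupp z hz
    have h2R : (0:ℝ) ≤ 2 / R := by positivity
    simp only [hCdef]; linarith
  have hzC' : ∀ z ∈ S, ‖z⁻¹‖ ≤ C := fun z hz => by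
    have h1 := hinv z hz
    have h3R : (0:ℝ) ≤ 3 * R / 2 := by positivity
    simp only [hCdef]; linarith
  have h1' : ∀ z ∈ S, ‖p‖ ^ (N + 1) * ‖z‖ ≤ 1/2 := fun z hz =>
    le_trans (mul_le_mul_of_nonneg_left (hzC z hz) hpow) hN
  have h2' : ∀ z ∈ S, ‖p‖ ^ (N + 1) * ‖z⁻¹‖ ≤ 1/2 := fun z hz =>
    le_trans (mul_le_mul_of_nonneg_left (hzC' z hz) hpow) hN
  have h3' : ‖p‖ ^ (N + 1) ≤ 1/2 := by
    have hb1 : (1:ℝ) ≤ C := by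
      have h2R : (0:ℝ) ≤ 2 / R := by positivity
      have h3R : (0:ℝ) ≤ 3 * R / 2 := by positivity
      simp only [hCdef]; linarith
    calc ‖p‖ ^ (N + 1) = ‖p‖ ^ (N + 1) * 1 := by ring
    _ ≤ ‖p‖ ^ (N + 1) * C := mul_le_mul_of_nonneg_left hb1 hpow
    _ ≤ 1/2 := hN
  -- continuity of the sum of logs on S
  have hcontsum : ContinuousOn (fun z => ∑' s, gTerm p N z s) S := by
    apply continuousOn_tsum (u := fun s => 3/2 * (C + C + 2) * ‖p‖ ^ (N + 1) * ‖p‖ ^ s)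
    · intro i
      have hc1 : ContinuousOn (fun z : ℂ => 1 - p ^ (i + N + 1) * z) S :=
        (continuousOn_const.sub (continuousOn_const.mul continuousOn_id))
      have hc2 : ContinuousOn (fun z : ℂ => 1 - p ^ (i + N + 1) * z⁻¹) S :=
        (continuousOn_const.sub (continuousOn_const.mul (continuousOn_id.inv₀ hzne)))
      apply ContinuousOn.sub
      apply ContinuousOn.add
      · exact hc1.clog fun z hz => aux_slit (small1 hp1 (h1' z hz) i)
      · exact hc2.clog fun z hz => aux_slit (small1 hp1 (h2' z hz) i)
      · exact continuousOn_const
    · exact Summable.mul_left _ (summable_geometric_of_lt_one (norm_nonneg p) hp1)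
    · intro n z hz
      refine le_trans (gTerm_norm_le hp1 (h1' z hz) (h2' z hz) h3' n) ?_
      have hz1 := hzC z hz
      have hz2 := hzC' z hz
      have hpn : (0:ℝ) ≤ ‖p‖ ^ n := by positivity
      have hmono : 3/2 * (‖z‖ + ‖z⁻¹‖ + 2) ≤ 3/2 * (C + C + 2) := by linarith
      exact mul_le_mul_of_nonneg_right
        (mul_le_mul_of_nonneg_right hmono hpow) hpn
  -- jProd equals finite product times exp of the sum on S
  have hdecomp : ∀ z ∈ S, jProd p z
      = (∏ i ∈ Finset.range N, jTerm p z i) * Complex.exp (∑' s, gTerm p N z s) :=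
    fun z hz => jProd_decomp hp1 (h1' z hz) (h2' z hz) h3'
  -- continuity of the decomposed function at z₀
  have hfin : ContinuousAt (fun z => ∏ i ∈ Finset.range N, jTerm p z i) z₀ := by
    have : ContinuousOn (fun z => ∏ i ∈ Finset.range N, jTerm p z i) S := by
      apply continuousOn_finset_prod
      intro i _
      unfold jTerm
      exact ((continuousOn_const.sub (continuousOn_const.mul continuousOn_id)).mul
        (continuousOn_const.sub
          (continuousOn_const.mul (continuousOn_id.inv₀ hzne)))).div_const _
    exact this.continuousAt hmemS
  have hexp : ContinuousAt (fun z => Complex.exp (∑' s, gTerm p N z s)) z₀ :=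
    Complex.continuous_exp.continuousAt.comp (hcontsum.continuousAt hmemS)
  have hca : ContinuousAt
      (fun z => (∏ i ∈ Finset.range N, jTerm p z i) * Complex.exp (∑' s, gTerm p N z s)) z₀ :=
    hfin.mul hexp
  apply hca.congr
  filter_upwards [hmemS] with z hz
  exact (hdecomp z hz).symm

lemma jTheta_continuousAt {p : ℂ} (hp1 : ‖p‖ < 1) {z₀ : ℂ} (hz₀ : z₀ ≠ 0) :
    ContinuousAt (jTheta p) z₀ := by
  have : ContinuousAt (fun z => (1 - z) * jProd p z) z₀ :=
    (continuousAt_const.sub continuousAt_id).mul (jProd_continuousAt hp1 hz₀)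
  exact this.congr (Eventually.of_forall fun z => (jTheta_eq p z).symm)

/-! ### Special values and inversion -/

lemma jProd_one {p : ℂ} (hp1 : ‖p‖ < 1) : jProd p 1 = 1 := by
  have : ∀ s : ℕ, jTerm p 1 s = 1 := by
    intro s
    unfold jTerm
    rw [inv_one, mul_one, ← sq]
    exact div_self (pow_ne_zero _ (one_sub_pow_ne hp1 s))
  rw [jProd, tprod_congr this, tprod_one]

lemma jTheta_inv (p : ℂ) {z : ℂ} (hz : z ≠ 0) : jTheta p z⁻¹ = -z⁻¹ * jTheta p z := by
  rw [jTheta_eq, jTheta_eq, jProd, jProd]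
  have hterm : ∀ s : ℕ, jTerm p z⁻¹ s = jTerm p z s := by
    intro s
    unfold jTerm
    rw [inv_inv]
    ring
  rw [tprod_congr hterm]
  have h1 : (1 : ℂ) - z⁻¹ = -z⁻¹ * (1 - z) := by
    field_simp
    ring
  rw [h1]
  ring

/-! ### Main theorem -/

/-- The residue of `ζ^E` at `x = q⁻¹` is `ϑ(q₁)ϑ(q₂)/(q·ϑ(q))`
(where `q = q₁q₂ ∉ p^ℤ`). -/
theorem zetaE_residue_at_q_inv (p : ℂ)
    (hp0 : 0 < ‖p‖) (hp1 : ‖p‖ < 1)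
    (q₁ q₂ : ℂ) (hq₁ : q₁ ≠ 0) (hq₂ : q₂ ≠ 0)
    (hq : ∀ n : ℤ, q₁ * q₂ ≠ p ^ n) :
    Tendsto (fun x : ℂ => (x - (q₁ * q₂)⁻¹) * zetaE p q₁ q₂ x) (𝓝[≠] (q₁ * q₂)⁻¹)
      (𝓝 (jTheta p q₁ * jTheta p q₂ / ((q₁ * q₂) * jTheta p (q₁ * q₂)))) := by
  have hp1' : ‖p‖ < 1 := hp1
  have hp : p ≠ 0 := by
    intro h; rw [h] at hp0; simp at hp0
  set q : ℂ := q₁ * q₂ with hqdef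
  have hq0 : q ≠ 0 := mul_ne_zero hq₁ hq₂
  have hqinv : q⁻¹ ≠ 0 := inv_ne_zero hq0
  have hθq : jTheta p q ≠ 0 := jTheta_ne_zero hp hp1' hq
  have hθqinv : jTheta p q⁻¹ ≠ 0 := by
    rw [jTheta_inv p hq0]
    exact mul_ne_zero (neg_ne_zero.mpr hqinv) hθq
  -- limits of the continuous pieces
  have hc1 : ContinuousAt (fun x : ℂ => jTheta p (x * q₁)) q⁻¹ := by
    have hmul : Tendsto (fun x : ℂ => x * q₁) (𝓝 q⁻¹) (𝓝 (q⁻¹ * q₁)) :=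
      (continuousAt_id.mul continuousAt_const)
    exact (jTheta_continuousAt hp1' (mul_ne_zero hqinv hq₁)).tendsto.comp hmul
  have hc2 : ContinuousAt (fun x : ℂ => jTheta p (x * q₂)) q⁻¹ := by
    have hmul : Tendsto (fun x : ℂ => x * q₂) (𝓝 q⁻¹) (𝓝 (q⁻¹ * q₂)) :=
      (continuousAt_id.mul continuousAt_const)
    exact (jTheta_continuousAt hp1' (mul_ne_zero hqinv hq₂)).tendsto.comp hmul
  have hc3 : ContinuousAt (jTheta p) q⁻¹ := jTheta_continuousAt hp1' hqinv
  have hc4 : ContinuousAt (fun x : ℂ => jProd p (x * q)) q⁻¹ := by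
    have h1 : q⁻¹ * q ≠ 0 := by
      rw [inv_mul_cancel₀ hq0]; norm_num
    have hmul : Tendsto (fun x : ℂ => x * q) (𝓝 q⁻¹) (𝓝 (q⁻¹ * q)) :=
      (continuousAt_id.mul continuousAt_const)
    exact (jProd_continuousAt hp1' h1).tendsto.comp hmul
  have hden : jTheta p q⁻¹ * jProd p (q⁻¹ * q) ≠ 0 := by
    rw [inv_mul_cancel₀ hq0, jProd_one hp1']
    simpa using hθqinv
  have hG : Tendsto (fun x : ℂ =>
      -q⁻¹ * (jTheta p (x * q₁) * jTheta p (x * q₂)) / (jTheta p x * jProd p (x * q)))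
      (𝓝 q⁻¹)
      (𝓝 (-q⁻¹ * (jTheta p (q⁻¹ * q₁) * jTheta p (q⁻¹ * q₂))
        / (jTheta p q⁻¹ * jProd p (q⁻¹ * q)))) :=
    ((continuousAt_const.mul (hc1.mul hc2)).div (hc3.mul hc4) hden)
  -- value of the limit
  have hval : -q⁻¹ * (jTheta p (q⁻¹ * q₁) * jTheta p (q⁻¹ * q₂))
      / (jTheta p q⁻¹ * jProd p (q⁻¹ * q))
      = jTheta p q₁ * jTheta p q₂ / (q * jTheta p q) := by
    have e1 : q⁻¹ * q₁ = q₂⁻¹ := by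
      rw [hqdef, mul_inv, mul_comm q₁⁻¹ q₂⁻¹, mul_assoc, inv_mul_cancel₀ hq₁, mul_one]
    have e2 : q⁻¹ * q₂ = q₁⁻¹ := by
      rw [hqdef, mul_inv, mul_assoc, inv_mul_cancel₀ hq₂, mul_one]
    rw [e1, e2, inv_mul_cancel₀ hq0, jProd_one hp1', jTheta_inv p hq₂, jTheta_inv p hq₁,
      jTheta_inv p hq0]
    field_simp
    ring
  rw [← hval]
  -- eventual equality on the punctured neighbourhood
  apply Tendsto.congr' _ (hG.mono_left nhdsWithin_le_nhds)
  filter_upwards [self_mem_nhdsWithin] with x hx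
  have hxne : x ≠ q⁻¹ := hx
  have hxq : (1 : ℂ) - x * q ≠ 0 := by
    intro h
    exact hxne (eq_inv_of_mul_eq_one_left (by linear_combination -h))
  have hxrw : x - q⁻¹ = -q⁻¹ * (1 - x * q) := by
    linear_combination (-x) * (inv_mul_cancel₀ hq0)
  have hkey : (x - q⁻¹) * zetaE p q₁ q₂ x
      = -q⁻¹ * (jTheta p (x * q₁) * jTheta p (x * q₂)) / (jTheta p x * jProd p (x * q)) := by
    rw [zetaE, jTheta_eq p (x * (q₁ * q₂)), ← hqdef, hxrw, ← mul_div_assoc]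
    rw [show -q⁻¹ * (1 - x * q) * (jTheta p (x * q₁) * jTheta p (x * q₂))
        = (1 - x * q) * (-q⁻¹ * (jTheta p (x * q₁) * jTheta p (x * q₂))) by ring,
      show jTheta p x * ((1 - x * q) * jProd p (x * q))
        = (1 - x * q) * (jTheta p x * jProd p (x * q)) by ring,
      mul_div_mul_left _ _ hxq]
  exact hkey.symm
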